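/- Let N ≥ 1 be an integer and let ω = exp(2πi/N) be a primitive N-th root of unity. Then for every t ∈ ℂ with t^N ≠ 1 and t² ≠ 1, (1/N) · Σ_{k=0}^{N−1} 1/((1 − ω^k t)² (1 − ω^{−k} t)²) = (1 + t² + 2N t^N − t^{2N} − 2N t^{N+2} − t^{2N+2}) / ((1 − t²)³ (1 − t^N)²). -/

import Mathlib

open Polynomial Finset

private lemma molien_prod_scalar {N : ℕ} (hN : 0 < N) {ω : ℂ} (hω : IsPrimitiveRoot ω N)
    (x : ℂ) : ∏ k ∈ range N, (x - ω ^ k) = x ^ N - 1 := by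
  have h := X_pow_sub_C_eq_prod hω hN (one_pow N)
  have h2 := congrArg (Polynomial.eval x) h
  simp only [eval_sub, eval_pow, eval_X, eval_one, eval_prod, eval_C, eval_mul, mul_one,
    eval_one] at h2
  simpa using h2.symm

private lemma molien_dsum_scalar {N : ℕ} (hN : 0 < N) {ω : ℂ} (hω : IsPrimitiveRoot ω N)
    (x : ℂ) : ∑ k ∈ range N, ∏ j ∈ (range N).erase k, (x - ω ^ j) = N * x ^ (N - 1) := by
  have h1 : HasDerivAt (fun y : ℂ => ∏ k ∈ range N, (y - ω ^ k))
      (∑ k ∈ range N, ∏ j ∈ (range N).erase k, (x - ω ^ j)) x := by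
    have := HasDerivAt.fun_finsetProd (u := range N) (f := fun k (y : ℂ) => y - ω ^ k)
      (f' := fun _ => 1) (x := x) (fun i _ => (hasDerivAt_id x).sub_const _)
    simpa using this
  have h2 : HasDerivAt (fun y : ℂ => y ^ N - 1) ((N : ℂ) * x ^ (N - 1)) x :=
    (hasDerivAt_pow N x).sub_const 1
  have hfun : (fun y : ℂ => ∏ k ∈ range N, (y - ω ^ k)) = fun y : ℂ => y ^ N - 1 :=
    funext fun y => molien_prod_scalar hN hω y
  rw [hfun] at h1
  exact h1.unique h2

private lemma molien_sub_pow_ne {N : ℕ} {ω : ℂ} (hω : IsPrimitiveRoot ω N) {x : ℂ}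
    (hx : x ^ N ≠ 1) (k : ℕ) : x - ω ^ k ≠ 0 := by
  rw [sub_ne_zero]
  rintro rfl
  exact hx (by rw [← pow_mul, mul_comm, pow_mul, hω.pow_eq_one, one_pow])

private lemma molien_sum_one {N : ℕ} (hN : 0 < N) {ω : ℂ} (hω : IsPrimitiveRoot ω N) {x : ℂ}
    (hx : x ^ N ≠ 1) :
    ∑ k ∈ range N, (x - ω ^ k)⁻¹ = N * x ^ (N - 1) / (x ^ N - 1) := by
  have hd : x ^ N - 1 ≠ 0 := sub_ne_zero.mpr hx
  rw [eq_div_iff hd, Finset.sum_mul, ← molien_dsum_scalar hN hω x]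
  refine Finset.sum_congr rfl fun k hk => ?_
  rw [← molien_prod_scalar hN hω x, ← Finset.mul_prod_erase _ _ hk,
    inv_mul_cancel_left₀ (molien_sub_pow_ne hω hx k)]

private lemma molien_sum_two {N : ℕ} (hN : 0 < N) {ω : ℂ} (hω : IsPrimitiveRoot ω N) {x : ℂ}
    (hx : x ^ N ≠ 1) (hx0 : x ≠ 0) :
    ∑ k ∈ range N, ((x - ω ^ k) ^ 2)⁻¹ =
      ((N : ℂ) ^ 2 * x ^ (2 * N) - N * (N - 1) * x ^ N * (x ^ N - 1)) /
        (x ^ 2 * (x ^ N - 1) ^ 2) := by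
  have hd : x ^ N - 1 ≠ 0 := sub_ne_zero.mpr hx
  have hU : IsOpen {y : ℂ | y ^ N ≠ 1} := by
    have : {y : ℂ | y ^ N ≠ 1} = (fun y : ℂ => y ^ N) ⁻¹' {(1 : ℂ)}ᶜ := rfl
    rw [this]
    exact (continuous_pow N).isOpen_preimage _ isOpen_compl_singleton
  have hev : (fun y : ℂ => ∑ k ∈ range N, (y - ω ^ k)⁻¹) =ᶠ[nhds x]
      (fun y : ℂ => (N : ℂ) * y ^ (N - 1) / (y ^ N - 1)) := by
    filter_upwards [hU.mem_nhds hx] with y hy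
    exact molien_sum_one hN hω hy
  have hF : HasDerivAt (fun y : ℂ => ∑ k ∈ range N, (y - ω ^ k)⁻¹)
      (∑ k ∈ range N, -((x - ω ^ k) ^ 2)⁻¹) x := by
    apply HasDerivAt.fun_sum
    intro k _
    have h := ((hasDerivAt_id x).sub_const (ω ^ k)).inv (molien_sub_pow_ne hω hx k)
    simpa [neg_div, div_eq_mul_inv, Pi.inv_def] using h
  have hG : HasDerivAt (fun y : ℂ => (N : ℂ) * y ^ (N - 1) / (y ^ N - 1))
      (((N : ℂ) * ((N - 1 : ℕ) * x ^ (N - 1 - 1)) * (x ^ N - 1) -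
        (N : ℂ) * x ^ (N - 1) * ((N : ℂ) * x ^ (N - 1))) / (x ^ N - 1) ^ 2) x := by
    exact (((hasDerivAt_pow (N - 1) x).const_mul (N : ℂ)).div
      ((hasDerivAt_pow N x).sub_const 1) hd).congr_deriv (by ring)
  have heq := hF.deriv.symm.trans ((Filter.EventuallyEq.deriv_eq hev).trans hG.deriv)
  have hsum : ∑ k ∈ range N, ((x - ω ^ k) ^ 2)⁻¹ =
      -((((N : ℂ) * ((N - 1 : ℕ) * x ^ (N - 1 - 1)) * (x ^ N - 1) -
        (N : ℂ) * x ^ (N - 1) * ((N : ℂ) * x ^ (N - 1))) / (x ^ N - 1) ^ 2)) := by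
    rw [← heq, ← Finset.sum_neg_distrib]
    simp
  rw [hsum, ← neg_div, div_eq_div_iff (pow_ne_zero 2 hd)
    (mul_ne_zero (pow_ne_zero 2 hx0) (pow_ne_zero 2 hd))]
  obtain ⟨M, rfl⟩ : ∃ M, N = M + 1 := ⟨N - 1, (Nat.succ_pred_eq_of_pos hN).symm⟩
  simp only [Nat.add_sub_cancel]
  rcases Nat.eq_zero_or_pos M with rfl | hM
  · push_cast
    ring
  · obtain ⟨L, rfl⟩ : ∃ L, M = L + 1 := ⟨M - 1, (Nat.succ_pred_eq_of_pos hM).symm⟩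
    simp only [Nat.add_sub_cancel]
    have h1 : x ^ (L + 1 + 1) = x ^ L * x * x := by ring
    have h2 : x ^ (2 * (L + 1 + 1)) = (x ^ L) ^ 2 * x ^ 4 := by ring
    have h3 : x ^ (L + 1) = x ^ L * x := by ring
    rw [h1, h2, h3]
    push_cast
    ring

set_option maxHeartbeats 1600000 in
private lemma molien_key (t ζ : ℂ) (ht0 : t ≠ 0) (h2 : t ^ 2 - 1 ≠ 0) (ha : 1 - ζ * t ≠ 0)
    (hb : ζ - t ≠ 0) (hc : t - ζ ≠ 0) :
    ζ ^ 2 / ((1 - ζ * t) ^ 2 * (ζ - t) ^ 2) =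
      2 * t / (t ^ 2 - 1) ^ 3 * (1 / (t - ζ) - t / (1 - ζ * t)) +
        t ^ 2 / (t ^ 2 - 1) ^ 2 * (1 / (t - ζ) ^ 2) +
        1 / (t ^ 2 * (t ^ 2 - 1) ^ 2) * (t ^ 2 / (1 - ζ * t) ^ 2) := by
  have ht2 : (t : ℂ) ^ 2 ≠ 0 := pow_ne_zero 2 ht0
  rw [div_sub_div _ _ hc ha, div_mul_div_comm, div_mul_div_comm, div_mul_div_comm,
    div_add_div _ _ (mul_ne_zero (pow_ne_zero 3 h2) (mul_ne_zero hc ha))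
      (mul_ne_zero (pow_ne_zero 2 h2) (pow_ne_zero 2 hc)),
    div_add_div _ _ (mul_ne_zero (mul_ne_zero (pow_ne_zero 3 h2) (mul_ne_zero hc ha))
      (mul_ne_zero (pow_ne_zero 2 h2) (pow_ne_zero 2 hc)))
      (mul_ne_zero (mul_ne_zero ht2 (pow_ne_zero 2 h2)) (pow_ne_zero 2 ha)),
    div_eq_div_iff (mul_ne_zero (pow_ne_zero 2 ha) (pow_ne_zero 2 hb))
      (mul_ne_zero (mul_ne_zero (mul_ne_zero (pow_ne_zero 3 h2) (mul_ne_zero hc ha))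
        (mul_ne_zero (pow_ne_zero 2 h2) (pow_ne_zero 2 hc)))
        (mul_ne_zero (mul_ne_zero ht2 (pow_ne_zero 2 h2)) (pow_ne_zero 2 ha)))]
  ring

private lemma molien_pointwise (t ζ : ℂ) (ht0 : t ≠ 0) (hz0 : ζ ≠ 0) (h2 : t ^ 2 - 1 ≠ 0)
    (hzt : ζ ≠ t) (hzu : ζ ≠ t⁻¹) :
    1 / ((1 - ζ * t) ^ 2 * (1 - ζ⁻¹ * t) ^ 2) =
      (2 * t / (t ^ 2 - 1) ^ 3) * ((t - ζ)⁻¹ - (t⁻¹ - ζ)⁻¹) +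
        (t ^ 2 / (t ^ 2 - 1) ^ 2) * ((t - ζ) ^ 2)⁻¹ +
        (1 / (t ^ 2 * (t ^ 2 - 1) ^ 2)) * ((t⁻¹ - ζ) ^ 2)⁻¹ := by
  have h3 : t - ζ ≠ 0 := sub_ne_zero.mpr (Ne.symm hzt)
  have h6 : ζ - t ≠ 0 := sub_ne_zero.mpr hzt
  have h5 : 1 - ζ * t ≠ 0 := by
    rw [sub_ne_zero]
    intro h
    exact hzu (eq_inv_of_mul_eq_one_left h.symm)
  have e1 : 1 - ζ⁻¹ * t = (ζ - t) / ζ := by field_simp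
  have e2 : t⁻¹ - ζ = (1 - ζ * t) / t := by field_simp
  rw [e1, e2, inv_div, div_pow, div_pow, inv_div, ← mul_div_assoc, one_div_div,
    inv_eq_one_div (t - ζ), inv_eq_one_div ((t - ζ) ^ 2)]
  exact molien_key t ζ ht0 h2 h5 h6 h3

private lemma molien_q1 (c a t : ℂ) (ha : a ≠ 0) (ht : t ≠ 0) (h : 1 - a * t ≠ 0) :
    c * a⁻¹ / ((a * t)⁻¹ - 1) = c * t / (1 - a * t) := by
  rw [div_eq_div_iff _ h]
  · field_simp
  · intro hh
    apply h
    have : (a * t)⁻¹ = 1 := by linear_combination hh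
    rw [← inv_inv (a*t), this, inv_one]
    ring

private lemma molien_q2 (c a t : ℂ) (ha : a ≠ 0) (ht : t ≠ 0) (h : 1 - a * t ≠ 0) :
    (c ^ 2 * (a ^ 2 * t ^ 2)⁻¹ - c * (c - 1) * (a * t)⁻¹ * ((a * t)⁻¹ - 1)) /
      ((t ^ 2)⁻¹ * ((a * t)⁻¹ - 1) ^ 2) =
    t ^ 2 * (c ^ 2 - c * (c - 1) * (1 - a * t)) / (1 - a * t) ^ 2 := by
  have hat : a * t ≠ 0 := mul_ne_zero ha ht
  have e : (a * t)⁻¹ - 1 = (1 - a * t) / (a * t) := by field_simp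
  rw [e, div_pow]
  rw [div_eq_div_iff _ (pow_ne_zero 2 h)]
  · field_simp
  · apply mul_ne_zero (inv_ne_zero (pow_ne_zero 2 ht))
    exact div_ne_zero (pow_ne_zero 2 h) (pow_ne_zero 2 hat)

set_option maxHeartbeats 3200000 in
private lemma molien_final (c a t : ℂ) (hc : c ≠ 0) (ht : t ≠ 0) (h2 : t ^ 2 - 1 ≠ 0)
    (hM1 : a * t - 1 ≠ 0) (hM2 : 1 - a * t ≠ 0) (h2' : 1 - t ^ 2 ≠ 0) :
    1 / c * (2 * t / (t ^ 2 - 1) ^ 3 * (c * a / (a * t - 1) - c * t / (1 - a * t)) +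
        t ^ 2 / (t ^ 2 - 1) ^ 2 *
          ((c ^ 2 * (a ^ 2 * t ^ 2) - c * (c - 1) * (a * t) * (a * t - 1)) /
            (t ^ 2 * (a * t - 1) ^ 2)) +
        1 / (t ^ 2 * (t ^ 2 - 1) ^ 2) *
          (t ^ 2 * (c ^ 2 - c * (c - 1) * (1 - a * t)) / (1 - a * t) ^ 2)) =
      (1 + t ^ 2 + 2 * c * (a * t) - a ^ 2 * t ^ 2 - 2 * c * (a * t ^ 3) - a ^ 2 * t ^ 4) /
        ((1 - t ^ 2) ^ 3 * (1 - a * t) ^ 2) := by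
  have ht2 : (t : ℂ) ^ 2 ≠ 0 := pow_ne_zero 2 ht
  have d1 : (t ^ 2 - 1) ^ 3 * ((a * t - 1) * (1 - a * t)) ≠ 0 :=
    mul_ne_zero (pow_ne_zero 3 h2) (mul_ne_zero hM1 hM2)
  have d2 : (t ^ 2 - 1) ^ 2 * (t ^ 2 * (a * t - 1) ^ 2) ≠ 0 :=
    mul_ne_zero (pow_ne_zero 2 h2) (mul_ne_zero ht2 (pow_ne_zero 2 hM1))
  have d3 : t ^ 2 * (t ^ 2 - 1) ^ 2 * (1 - a * t) ^ 2 ≠ 0 :=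
    mul_ne_zero (mul_ne_zero ht2 (pow_ne_zero 2 h2)) (pow_ne_zero 2 hM2)
  rw [div_sub_div _ _ hM1 hM2, div_mul_div_comm, div_mul_div_comm, div_mul_div_comm,
    div_add_div _ _ d1 d2, div_add_div _ _ (mul_ne_zero d1 d2) d3, div_mul_div_comm,
    div_eq_div_iff (mul_ne_zero hc (mul_ne_zero (mul_ne_zero d1 d2) d3))
      (mul_ne_zero (pow_ne_zero 3 h2') (pow_ne_zero 2 hM2))]
  ring

set_option maxHeartbeats 4000000 in
open Complex in
/-- Molien sum for the cyclic group `ℤ_N ⊂ SU₂`: for `ω = exp(2πi/N)` and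
`t ∈ ℂ` with `t^N ≠ 1`, `t² ≠ 1`, the average of `1/((1-ω^k t)²(1-ω^{-k}t)²)` equals the
stated rational function. -/
theorem stmt_11 (N : ℕ) (hN : 1 ≤ N) (ω : ℂ) (hω : ω = Complex.exp (2 * Real.pi * Complex.I / N))
    (t : ℂ) (ht : t ^ N ≠ 1) (ht2 : t ^ 2 ≠ 1) :
    (1 / (N : ℂ)) * ∑ k ∈ Finset.range N,
        1 / ((1 - ω ^ k * t) ^ 2 * (1 - ω ^ (-(k : ℤ)) * t) ^ 2)
      = (1 + t ^ 2 + 2 * N * t ^ N - t ^ (2 * N) - 2 * N * t ^ (N + 2) - t ^ (2 * N + 2))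
        / ((1 - t ^ 2) ^ 3 * (1 - t ^ N) ^ 2) := by
  have hNne : N ≠ 0 := by omega
  have hN0 : (N : ℂ) ≠ 0 := Nat.cast_ne_zero.mpr hNne
  have hprim : IsPrimitiveRoot ω N := by
    rw [hω]
    exact Complex.isPrimitiveRoot_exp N hNne
  rcases eq_or_ne t 0 with rfl | ht0
  · simp only [mul_zero, sub_zero, one_pow, mul_one, div_one, Finset.sum_const,
      Finset.card_range, nsmul_eq_mul, zero_pow hNne, zero_pow (by omega : 2 * N ≠ 0),
      zero_pow (by omega : N + 2 ≠ 0), zero_pow (by omega : 2 * N + 2 ≠ 0),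
      zero_pow (two_ne_zero)]
    field_simp
    norm_num
  have h2 : t ^ 2 - 1 ≠ 0 := sub_ne_zero.mpr ht2
  have hd : t ^ N - 1 ≠ 0 := sub_ne_zero.mpr ht
  have hu : (t⁻¹) ^ N ≠ 1 := by
    rw [inv_pow]
    exact fun h => ht (inv_eq_one.mp h)
  have hterm : ∀ k ∈ Finset.range N,
      1 / ((1 - ω ^ k * t) ^ 2 * (1 - ω ^ (-(k : ℤ)) * t) ^ 2) =
      (2 * t / (t ^ 2 - 1) ^ 3) * ((t - ω ^ k)⁻¹ - (t⁻¹ - ω ^ k)⁻¹) +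
        (t ^ 2 / (t ^ 2 - 1) ^ 2) * ((t - ω ^ k) ^ 2)⁻¹ +
        (1 / (t ^ 2 * (t ^ 2 - 1) ^ 2)) * ((t⁻¹ - ω ^ k) ^ 2)⁻¹ := by
    intro k _
    rw [zpow_neg, zpow_natCast]
    exact molien_pointwise t (ω ^ k) ht0 (pow_ne_zero k (hprim.ne_zero hNne)) h2
      (Ne.symm (sub_ne_zero.mp (molien_sub_pow_ne hprim ht k)))
      (Ne.symm (sub_ne_zero.mp (molien_sub_pow_ne hprim hu k)))
  rw [Finset.sum_congr rfl hterm, Finset.sum_add_distrib, Finset.sum_add_distrib,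
    ← Finset.mul_sum, ← Finset.mul_sum, ← Finset.mul_sum, Finset.sum_sub_distrib,
    molien_sum_one hN hprim ht, molien_sum_one hN hprim hu,
    molien_sum_two hN hprim ht ht0, molien_sum_two hN hprim hu (inv_ne_zero ht0)]
  simp only [inv_pow]
  obtain ⟨M, rfl⟩ : ∃ M, N = M + 1 := ⟨N - 1, by omega⟩
  simp only [Nat.add_sub_cancel]
  have hMt0 : t ^ M ≠ 0 := pow_ne_zero M ht0
  have ht' : t ^ M * t ≠ 1 := by rw [← pow_succ]; exact ht
  have p1 : t ^ (M + 1) = t ^ M * t := by ring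
  have p2 : t ^ (2 * (M + 1)) = (t ^ M) ^ 2 * t ^ 2 := by ring
  have p3 : t ^ (M + 1 + 2) = t ^ M * t ^ 3 := by ring
  have p4 : t ^ (2 * (M + 1) + 2) = (t ^ M) ^ 2 * t ^ 4 := by ring
  rw [p1, p2, p3, p4]
  have hM1 : t ^ M * t - 1 ≠ 0 := sub_ne_zero.mpr ht'
  have hM2 : 1 - t ^ M * t ≠ 0 := sub_ne_zero.mpr (Ne.symm ht')
  have h2' : 1 - t ^ 2 ≠ 0 := sub_ne_zero.mpr (Ne.symm ht2)
  rw [molien_q1 (↑(M + 1)) (t ^ M) t hMt0 ht0 hM2,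
    molien_q2 (↑(M + 1)) (t ^ M) t hMt0 ht0 hM2]
  exact molien_final (↑(M + 1)) (t ^ M) t hN0 ht0 h2 hM1 hM2 h2'
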